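/- Let L = ⌊log₂ n⌋ and p_i = Σ_{d ∈ I_i} μ(d) where I_i = [2^i, 2^{i+1}) for 0 ≤ i < L and I_L = [2^L, n]. If p_i > 0 for all 0 ≤ i ≤ L−1, then for every starting state a the expected hitting time of 0 for the token process satisfies T_a ≤ 2/p_{j−1} + 2/p_{j−2} + ... + 2/p_1 + 3/p_0, where j is such that a ∈ I_j. -/

import Mathlib

open Finset

/-- Block probability `p i = μ([2^i, 2^{i+1}))`. -/
noncomputable def Pblk (μ : ℕ → ℝ) (i : ℕ) : ℝ := ∑ d ∈ Finset.Ico (2^i) (2^(i+1)), μ d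

/-- Accumulated bound `D j = 1/p₀ + Σ_{i<j} 2/p_i`. -/
noncomputable def Dfun (μ : ℕ → ℝ) (j : ℕ) : ℝ := 1/Pblk μ 0 + ∑ i ∈ Finset.range j, 2/Pblk μ i

/-- Supersolution for the hitting-time recurrence. -/
noncomputable def fB (μ : ℕ → ℝ) (a : ℕ) : ℝ :=
  if a = 0 then 0 else if a = 1 then 1/Pblk μ 0
  else Dfun μ (Nat.log 2 a - 1) +
    (if a < 3 * 2^(Nat.log 2 a - 1) then 1 else 2)/Pblk μ (Nat.log 2 a - 1)

lemma Pblk_zero (μ : ℕ → ℝ) : Pblk μ 0 = μ 1 := by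
  have h : Finset.Ico (2^0) (2^1) = {1} := rfl
  simp [Pblk, h]

lemma Dfun_succ (μ : ℕ → ℝ) (m : ℕ) : Dfun μ (m+1) = Dfun μ m + 2/Pblk μ m := by
  unfold Dfun; rw [Finset.sum_range_succ]; ring

lemma Dfun_mono (μ : ℕ → ℝ) (L : ℕ) (hL : ∀ i < L, 0 < Pblk μ i)
    {j j' : ℕ} (h : j ≤ j') (h' : j' ≤ L) : Dfun μ j ≤ Dfun μ j' := by
  unfold Dfun
  have : ∑ i ∈ Finset.range j, 2/Pblk μ i ≤ ∑ i ∈ Finset.range j', 2/Pblk μ i := by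
    apply Finset.sum_le_sum_of_subset_of_nonneg (Finset.range_subset_range.mpr h)
    intro i hi _
    have := hL i (lt_of_lt_of_le (Finset.mem_range.mp hi) h')
    positivity
  linarith

lemma Dfun_nonneg (μ : ℕ → ℝ) (L : ℕ) (hL : ∀ i < L, 0 < Pblk μ i) (h0 : 0 < L)
    {j : ℕ} (hj : j ≤ L) : 0 ≤ Dfun μ j := by
  have h0' := hL 0 h0
  have h1 : 0 ≤ 1/Pblk μ 0 := by positivity
  have h2 : Dfun μ 0 ≤ Dfun μ j := Dfun_mono μ L hL (Nat.zero_le j) hj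
  have : Dfun μ 0 = 1/Pblk μ 0 := by simp [Dfun]
  linarith

lemma fB_le_D (μ : ℕ → ℝ) (L : ℕ) (hL : ∀ i < L, 0 < Pblk μ i) (h0 : 0 < L)
    {a : ℕ} (ha : 1 ≤ a) (hja : Nat.log 2 a ≤ L) : fB μ a ≤ Dfun μ (Nat.log 2 a) := by
  rcases eq_or_lt_of_le ha with h1 | h2
  · simp [fB, ← h1, Dfun]
  · -- a ≥ 2
    have ha2 : 2 ≤ a := h2
    have hj1 : 1 ≤ Nat.log 2 a := (Nat.le_log_iff_pow_le (by norm_num) (by omega)).mpr (by simpa using ha2)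
    set m := Nat.log 2 a - 1 with hm
    have hjm : Nat.log 2 a = m + 1 := by omega
    have hPm : 0 < Pblk μ m := hL m (by omega)
    have hfb : fB μ a = Dfun μ m + (if a < 3 * 2^m then (1:ℝ) else 2)/Pblk μ m := by
      simp only [fB, if_neg (by omega : a ≠ 0), if_neg (by omega : a ≠ 1)]
      rfl
    rw [hfb, hjm, Dfun_succ]
    gcongr
    split_ifs <;> norm_num

lemma fB_ge_D (μ : ℕ → ℝ) (L : ℕ) (hL : ∀ i < L, 0 < Pblk μ i)
    {a : ℕ} (ha : 2 ≤ a) (hja : Nat.log 2 a ≤ L) : Dfun μ (Nat.log 2 a - 1) ≤ fB μ a := by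
  have hj1 : 1 ≤ Nat.log 2 a := (Nat.le_log_iff_pow_le (by norm_num) (by omega)).mpr (by simpa using ha)
  have hPm : 0 < Pblk μ (Nat.log 2 a - 1) := hL _ (by omega)
  have hfb : fB μ a = Dfun μ (Nat.log 2 a - 1) +
      (if a < 3 * 2^(Nat.log 2 a - 1) then (1:ℝ) else 2)/Pblk μ (Nat.log 2 a - 1) := by
    simp only [fB, if_neg (by omega : a ≠ 0), if_neg (by omega : a ≠ 1)]
  rw [hfb]
  have : (0:ℝ) ≤ (if a < 3 * 2^(Nat.log 2 a - 1) then (1:ℝ) else 2)/Pblk μ (Nat.log 2 a - 1) := by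
    split_ifs <;> exact div_nonneg (by norm_num) hPm.le
  linarith

lemma fB_nonneg (μ : ℕ → ℝ) (L : ℕ) (hL : ∀ i < L, 0 < Pblk μ i) (h0 : 0 < L)
    {a : ℕ} (hja : Nat.log 2 a ≤ L) : 0 ≤ fB μ a := by
  have hP0 := hL 0 h0
  rcases Nat.lt_or_ge a 2 with h | h
  · interval_cases a
    · simp [fB]
    · simp only [fB, if_neg one_ne_zero, if_pos rfl]
      exact div_nonneg (by norm_num) hP0.le
  · have h1 := fB_ge_D μ L hL h hja
    have hj1 : 1 ≤ Nat.log 2 a := (Nat.le_log_iff_pow_le (by norm_num) (by omega)).mpr (by simpa using h)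
    have h2 := Dfun_nonneg μ L hL h0 (j := Nat.log 2 a - 1) (by omega)
    linarith

lemma fB_mono (μ : ℕ → ℝ) (L : ℕ) (hL : ∀ i < L, 0 < Pblk μ i) (h0 : 0 < L)
    {a b : ℕ} (hb : b ≤ a) (ha1 : 1 ≤ a) (hja : Nat.log 2 a ≤ L) : fB μ b ≤ fB μ a := by
  have hP0 := hL 0 h0
  have hjb : Nat.log 2 b ≤ Nat.log 2 a := Nat.log_mono_right hb
  rcases Nat.lt_or_ge b 1 with hb0 | hb1
  · interval_cases b
    simpa [fB] using fB_nonneg μ L hL h0 hja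
  rcases Nat.lt_or_ge a 2 with ha2 | ha2
  · interval_cases a; interval_cases b; exact le_refl _
  -- a ≥ 2
  have hj1 : 1 ≤ Nat.log 2 a := (Nat.le_log_iff_pow_le (by norm_num) (by omega)).mpr (by simpa using ha2)
  rcases Nat.lt_or_ge b 2 with hb2 | hb2
  · -- b = 1
    interval_cases b
    have h1 : fB μ 1 = Dfun μ 0 := by simp [fB, Dfun]
    rw [h1]
    calc Dfun μ 0 ≤ Dfun μ (Nat.log 2 a - 1) := Dfun_mono μ L hL (Nat.zero_le _) (by omega)
    _ ≤ fB μ a := fB_ge_D μ L hL ha2 hja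
  · -- b ≥ 2
    have hjb1 : 1 ≤ Nat.log 2 b := (Nat.le_log_iff_pow_le (by norm_num) (by omega)).mpr (by simpa using hb2)
    rcases eq_or_lt_of_le hjb with hje | hjlt
    · -- same block
      have hPm : 0 < Pblk μ (Nat.log 2 a - 1) := hL _ (by omega)
      have hfa : fB μ a = Dfun μ (Nat.log 2 a - 1) +
          (if a < 3 * 2^(Nat.log 2 a - 1) then (1:ℝ) else 2)/Pblk μ (Nat.log 2 a - 1) := by
        simp only [fB, if_neg (by omega : a ≠ 0), if_neg (by omega : a ≠ 1)]
      have hfbv : fB μ b = Dfun μ (Nat.log 2 a - 1) +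
          (if b < 3 * 2^(Nat.log 2 a - 1) then (1:ℝ) else 2)/Pblk μ (Nat.log 2 a - 1) := by
        simp only [fB, if_neg (by omega : b ≠ 0), if_neg (by omega : b ≠ 1), hje]
      rw [hfa, hfbv]
      gcongr
      by_cases hbc : b < 3 * 2^(Nat.log 2 a - 1)
      · split_ifs <;> norm_num
      · rw [if_neg hbc, if_neg fun hac => hbc (lt_of_le_of_lt hb hac)]
    · -- strictly lower block
      calc fB μ b ≤ Dfun μ (Nat.log 2 b) := fB_le_D μ L hL h0 (by omega) (by omega)
      _ ≤ Dfun μ (Nat.log 2 a - 1) := Dfun_mono μ L hL (by omega) (by omega)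
      _ ≤ fB μ a := fB_ge_D μ L hL ha2 hja

lemma fB_gap (μ : ℕ → ℝ) (L : ℕ) (hL : ∀ i < L, 0 < Pblk μ i)
    {a b : ℕ} (ha : 2 ≤ a) (hja : Nat.log 2 a ≤ L)
    (hb : b + 2^(Nat.log 2 a - 1) ≤ a) :
    fB μ b + 1/Pblk μ (Nat.log 2 a - 1) ≤ fB μ a := by
  have hj1 : 1 ≤ Nat.log 2 a := (Nat.le_log_iff_pow_le (by norm_num) (by omega)).mpr (by simpa using ha)
  have h0 : 0 < L := by omega
  set j := Nat.log 2 a with hjdef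
  set m := j - 1 with hm
  have hjm : j = m + 1 := by omega
  have haj : 2^j ≤ a := Nat.pow_log_le_self 2 (by omega)
  have haj2 : a < 2^(j+1) := Nat.lt_pow_succ_log_self (by norm_num) a
  have hPm : 0 < Pblk μ m := hL m (by omega)
  have hpow : 2^j = 2 * 2^m := by rw [hjm]; ring
  have hpow2 : 2^(j+1) = 4 * 2^m := by rw [hjm]; ring
  have hfa : fB μ a = Dfun μ m + (if a < 3 * 2^m then (1:ℝ) else 2)/Pblk μ m := by
    simp only [fB, if_neg (by omega : a ≠ 0), if_neg (by omega : a ≠ 1)]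
    rfl
  -- bound fB b ≤ Dfun μ m whenever b < 2^j
  have hlow : b < 2^j → fB μ b ≤ Dfun μ m := by
    intro hbj
    rcases Nat.eq_zero_or_pos b with hb0 | hb1
    · rw [hb0]
      simpa [fB] using Dfun_nonneg μ L hL h0 (j := m) (by omega)
    · have hlb : Nat.log 2 b ≤ m := by
        have := Nat.log_lt_of_lt_pow (by omega : b ≠ 0) (show b < 2^(m+1) by omega)
        omega
      calc fB μ b ≤ Dfun μ (Nat.log 2 b) := fB_le_D μ L hL h0 hb1 (by omega)
      _ ≤ Dfun μ m := Dfun_mono μ L hL hlb (by omega)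
  by_cases h3 : a < 3 * 2^m
  · -- one success left
    rw [hfa, if_pos h3]
    have hbj : b < 2^j := by omega
    linarith [hlow hbj]
  · -- two successes left
    rw [hfa, if_neg h3]
    have hb3 : b < 3 * 2^m := by omega
    rcases Nat.lt_or_ge b (2^j) with hbj | hbj
    · have h1 : 1/Pblk μ m ≤ 2/Pblk μ m := by gcongr; norm_num
      linarith [hlow hbj]
    · -- b in same block, with one success needed
      have h2j : 2 ≤ 2^j := by
        calc 2 = 2^1 := rfl
        _ ≤ 2^j := Nat.pow_le_pow_right (by norm_num) hj1
      have hb2 : 2 ≤ b := le_trans h2j hbj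
      have hlogb : Nat.log 2 b = j := Nat.log_eq_of_pow_le_of_lt_pow hbj (by omega)
      have hfbv : fB μ b = Dfun μ m + 1/Pblk μ m := by
        simp only [fB, if_neg (by omega : b ≠ 0), if_neg (by omega : b ≠ 1), hlogb, ← hm,
          if_pos hb3]
      rw [hfbv]
      exact le_of_eq (by ring)

lemma fB_super (μ : ℕ → ℝ) (L : ℕ) (hμ0 : ∀ d, 0 ≤ μ d)
    (hL : ∀ i < L, 0 < Pblk μ i) (h0 : 0 < L)
    {a : ℕ} (ha1 : 1 ≤ a) (hja : Nat.log 2 a ≤ L) :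
    1 + ∑ d ∈ Finset.Icc 1 a, μ d * fB μ (a - d) ≤ (∑ d ∈ Finset.Icc 1 a, μ d) * fB μ a := by
  have hP0 := hL 0 h0
  have key : (1:ℝ) ≤ ∑ d ∈ Finset.Icc 1 a, μ d * (fB μ a - fB μ (a - d)) := by
    rcases Nat.lt_or_ge a 2 with ha2 | ha2
    · interval_cases a
      have h1 : Finset.Icc 1 1 = {1} := rfl
      have hμ1 : 0 < μ 1 := by rwa [Pblk_zero μ] at hP0
      rw [h1, Finset.sum_singleton]
      have hf0 : fB μ (1-1) = 0 := by norm_num [fB]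
      have hf1 : fB μ 1 = 1 / Pblk μ 0 := by norm_num [fB]
      rw [hf0, hf1, Pblk_zero μ, sub_zero, mul_one_div, div_self hμ1.ne']
    · have hj1 : 1 ≤ Nat.log 2 a :=
        (Nat.le_log_iff_pow_le (by norm_num) (by omega)).mpr (by simpa using ha2)
      set m := Nat.log 2 a - 1 with hm
      have hjm : Nat.log 2 a = m + 1 := by omega
      have haj : 2 ^ (m+1) ≤ a := by rw [← hjm]; exact Nat.pow_log_le_self 2 (by omega)
      have hPm : 0 < Pblk μ m := hL m (by omega)
      have hone : 1 ≤ 2^m := Nat.one_le_two_pow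
      have hsub : Finset.Ico (2^m) (2^(m+1)) ⊆ Finset.Icc 1 a := by
        intro d hd
        rw [Finset.mem_Ico] at hd
        rw [Finset.mem_Icc]
        omega
      calc (1:ℝ) = Pblk μ m * (1 / Pblk μ m) := by field_simp
      _ = ∑ d ∈ Finset.Ico (2^m) (2^(m+1)), μ d * (1 / Pblk μ m) := by
          rw [Pblk, Finset.sum_mul]
      _ ≤ ∑ d ∈ Finset.Ico (2^m) (2^(m+1)), μ d * (fB μ a - fB μ (a - d)) := by
          apply Finset.sum_le_sum
          intro d hd
          rw [Finset.mem_Ico] at hd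
          have hgap := fB_gap μ L hL ha2 hja (b := a - d) (by rw [← hm]; omega)
          have hd0 := hμ0 d
          nlinarith [hgap]
      _ ≤ ∑ d ∈ Finset.Icc 1 a, μ d * (fB μ a - fB μ (a - d)) := by
          apply Finset.sum_le_sum_of_subset_of_nonneg hsub
          intro d hd _
          have h1 := hμ0 d
          have h2 : fB μ (a - d) ≤ fB μ a := fB_mono μ L hL h0 (Nat.sub_le a d) ha1 hja
          nlinarith
  have expand : (∑ d ∈ Finset.Icc 1 a, μ d) * fB μ a - ∑ d ∈ Finset.Icc 1 a, μ d * fB μ (a-d)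
      = ∑ d ∈ Finset.Icc 1 a, μ d * (fB μ a - fB μ (a - d)) := by
    rw [Finset.sum_mul, ← Finset.sum_sub_distrib]
    apply Finset.sum_congr rfl
    intro d _
    ring
  linarith

theorem stmt5 (n : ℕ) (hn : 2 ≤ n) (μ : ℕ → ℝ)
    (hμ0 : ∀ d, 0 ≤ μ d)
    (hsupp : ∀ d, d ∉ Finset.Icc 1 n → μ d = 0)
    (hsum : ∑ d ∈ Finset.Icc 1 n, μ d = 1)
    (hp : ∀ i < Nat.log 2 n, 0 < ∑ d ∈ Finset.Ico (2 ^ i) (2 ^ (i + 1)), μ d)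
    (T : ℕ → ℝ) (hT0 : T 0 = 0)
    (hTrec : ∀ a ∈ Finset.Icc 1 n,
      (∑ d ∈ Finset.Icc 1 a, μ d) * T a = 1 + ∑ d ∈ Finset.Icc 1 a, μ d * T (a - d)) :
    ∀ a ∈ Finset.Icc 1 n,
      T a ≤ 3 / μ 1 +
        ∑ i ∈ Finset.Ico 1 (Nat.log 2 a), 2 / ∑ d ∈ Finset.Ico (2 ^ i) (2 ^ (i + 1)), μ d := by
  set L := Nat.log 2 n with hLdef
  have h0 : 0 < L := by
    have h2 : (2:ℕ)^1 ≤ n := by omega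
    exact (Nat.le_log_iff_pow_le (by norm_num) (by omega)).mpr h2
  have hL : ∀ i < L, 0 < Pblk μ i := hp
  have hP0 : 0 < Pblk μ 0 := hL 0 h0
  have hμ1 : 0 < μ 1 := by rwa [Pblk_zero μ] at hP0
  have main : ∀ b, b ∈ Finset.Icc 1 n → T b ≤ fB μ b := by
    intro b
    induction b using Nat.strong_induction_on with
    | _ b ih =>
      intro hbmem
      rw [Finset.mem_Icc] at hbmem
      have hjb : Nat.log 2 b ≤ L := Nat.log_mono_right hbmem.2
      have hrec := hTrec b (Finset.mem_Icc.mpr hbmem)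
      have hsuper := fB_super μ L hμ0 hL h0 hbmem.1 hjb
      have hstep : ∑ d ∈ Finset.Icc 1 b, μ d * T (b - d) ≤
          ∑ d ∈ Finset.Icc 1 b, μ d * fB μ (b - d) := by
        apply Finset.sum_le_sum
        intro d hd
        rw [Finset.mem_Icc] at hd
        apply mul_le_mul_of_nonneg_left _ (hμ0 d)
        rcases Nat.eq_zero_or_pos (b - d) with h | h
        · rw [h, hT0]; simp [fB]
        · exact ih (b - d) (by omega) (Finset.mem_Icc.mpr ⟨h, by omega⟩)
      have hSpos : 0 < ∑ d ∈ Finset.Icc 1 b, μ d := by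
        have h1 : μ 1 ≤ ∑ d ∈ Finset.Icc 1 b, μ d :=
          Finset.single_le_sum (fun d _ => hμ0 d) (Finset.mem_Icc.mpr ⟨le_refl 1, hbmem.1⟩)
        linarith
      have hfin : (∑ d ∈ Finset.Icc 1 b, μ d) * T b ≤ (∑ d ∈ Finset.Icc 1 b, μ d) * fB μ b := by
        rw [hrec]; linarith
      exact le_of_mul_le_mul_left hfin hSpos
  intro a ha
  have hamem := ha
  rw [Finset.mem_Icc] at hamem
  have hja : Nat.log 2 a ≤ L := Nat.log_mono_right hamem.2
  have h2 := fB_le_D μ L hL h0 hamem.1 hja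
  have h3 : Dfun μ (Nat.log 2 a) ≤ 3 / μ 1 + ∑ i ∈ Finset.Ico 1 (Nat.log 2 a), 2 / Pblk μ i := by
    rcases Nat.eq_zero_or_pos (Nat.log 2 a) with hj | hj
    · rw [hj]
      have hD0 : Dfun μ 0 = 1 / μ 1 := by simp [Dfun, Pblk_zero μ]
      rw [hD0]
      have hempty : Finset.Ico 1 0 = ∅ := rfl
      rw [hempty, Finset.sum_empty, add_zero]
      exact (div_le_div_iff_of_pos_right hμ1).mpr (by norm_num)
    · unfold Dfun
      rw [Finset.range_eq_Ico, Finset.sum_eq_sum_Ico_succ_bot hj, Pblk_zero μ]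
      have : 1 / μ 1 + 2 / μ 1 = 3 / μ 1 := by ring
      rw [zero_add]
      linarith
  calc T a ≤ fB μ a := main a ha
  _ ≤ Dfun μ (Nat.log 2 a) := h2
  _ ≤ 3 / μ 1 + ∑ i ∈ Finset.Ico 1 (Nat.log 2 a), 2 / Pblk μ i := h3
  _ = 3 / μ 1 + ∑ i ∈ Finset.Ico 1 (Nat.log 2 a), 2 / ∑ d ∈ Finset.Ico (2 ^ i) (2 ^ (i + 1)), μ d := rfl
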